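/- Let T > 0, C > 0, k ≥ 0, m > k with m ≥ 2, K > 0 and λ, ε, β > 0. Let w : (0,T)×H → ℝ satisfy w(t,x) ≥ −C(1+‖x‖^k) for all (t,x) ∈ (0,T)×H. Then the inf-convolution w_{λ,ε,β} is real-valued and the function (t,x) ↦ w_{λ,ε,β}(t,x) − ‖x‖_{-1}²/(2ε) − t²/(2β) is concave on (0,T)×H. -/

import Mathlib

open scoped InnerProductSpace

/-- The set of values over which the infimum defining the inf-convolution
`w_{λ,ε,β}(t,x)` is taken. -/
noncomputable def infConvSet {H : Type*} [NormedAddCommGroup H] [InnerProductSpace ℝ H]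
    (B : H →L[ℝ] H) (T m K lam ε β : ℝ) (w : ℝ → H → ℝ) (t : ℝ) (x : H) : Set ℝ :=
  (fun p : ℝ × H =>
      w p.1 p.2 + ⟪B (x - p.2), x - p.2⟫_ℝ / (2 * ε) + (t - p.1) ^ 2 / (2 * β)
        + lam * Real.exp (2 * m * K * (T - p.1)) * ‖p.2‖ ^ m) ''
    (Set.Ioo 0 T ×ˢ (Set.univ : Set H))

/-- The inf-convolution
`w_{λ,ε,β}(t,x) = inf_{(s,y)∈(0,T)×H} { w(s,y) + ‖x−y‖₋₁²/(2ε) + (t−s)²/(2β) + λ e^{2mK(T−s)}‖y‖^m }`,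
where `‖z‖₋₁² = ⟨Bz,z⟩`. -/
noncomputable def infConv {H : Type*} [NormedAddCommGroup H] [InnerProductSpace ℝ H]
    (B : H →L[ℝ] H) (T m K lam ε β : ℝ) (w : ℝ → H → ℝ) (t : ℝ) (x : H) : ℝ :=
  sInf (infConvSet B T m K lam ε β w t x)

lemma aux_rpow_bound (C lam k m : ℝ) (hC : 0 < C) (hlam : 0 < lam) (hk : 0 ≤ k)
    (hkm : k < m) : ∃ M : ℝ, 0 ≤ M ∧ ∀ r : ℝ, 0 ≤ r → C * r ^ k ≤ lam * r ^ m + M := by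
  set R : ℝ := (C / lam) ^ (1 / (m - k)) with hR
  have hR0 : 0 ≤ R := Real.rpow_nonneg (by positivity) _
  refine ⟨C * (1 + R) ^ k, by positivity, fun r hr => ?_⟩
  rcases le_or_gt r (1 + R) with h | h
  · have h1 : r ^ k ≤ (1 + R) ^ k := Real.rpow_le_rpow hr h hk
    nlinarith [Real.rpow_nonneg hr m, mul_le_mul_of_nonneg_left h1 hC.le]
  · have hrpos : (0 : ℝ) < r := by linarith
    have hRr : R ≤ r := by linarith
    have hmk : (0 : ℝ) < m - k := by linarith
    have h2 : (C / lam) ≤ r ^ (m - k) := by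
      have h3 : R ^ (m - k) ≤ r ^ (m - k) := Real.rpow_le_rpow hR0 hRr hmk.le
      have h4 : R ^ (m - k) = C / lam := by
        rw [hR, ← Real.rpow_mul (by positivity), one_div_mul_cancel hmk.ne',
          Real.rpow_one]
      linarith [h4 ▸ h3]
    have h5 : C ≤ lam * r ^ (m - k) := by
      rw [div_le_iff₀ hlam] at h2; linarith [h2]
    have h6 : r ^ m = r ^ k * r ^ (m - k) := by
      rw [← Real.rpow_add hrpos]; ring_nf
    rw [h6]
    have hk0 : 0 ≤ r ^ k := Real.rpow_nonneg hr k
    nlinarith [mul_le_mul_of_nonneg_left h5 hk0,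
      Real.rpow_nonneg (by positivity : (0:ℝ) ≤ 1 + R) k,
      mul_nonneg hC.le (Real.rpow_nonneg (by positivity : (0:ℝ) ≤ 1 + R) k)]

/-- Lemma 4.2(ii) (inf-convolution case): if `w(t,x) ≥ −C(1+‖x‖^k)` with `k < m`, then the
inf-convolution `w_{λ,ε,β}` is real-valued (the defining infimum is over a nonempty set of
reals which is bounded below) and `(t,x) ↦ w_{λ,ε,β}(t,x) − ‖x‖₋₁²/(2ε) − t²/(2β)` is concave
on `(0,T) × H`. -/
theorem infConv_semiconcave
    {H : Type*} [NormedAddCommGroup H] [InnerProductSpace ℝ H] [CompleteSpace H]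
    [TopologicalSpace.SeparableSpace H]
    (B : H →L[ℝ] H) (hBsa : IsSelfAdjoint B) (hBpos : ∀ x : H, 0 ≤ ⟪B x, x⟫_ℝ)
    (T C k m K lam ε β : ℝ)
    (hT : 0 < T) (hC : 0 < C) (hk : 0 ≤ k) (hkm : k < m) (hm : 2 ≤ m)
    (hK : 0 < K) (hlam : 0 < lam) (hε : 0 < ε) (hβ : 0 < β)
    (w : ℝ → H → ℝ)
    (hgrowth : ∀ t ∈ Set.Ioo (0 : ℝ) T, ∀ x : H, -C * (1 + ‖x‖ ^ k) ≤ w t x) :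
    (∀ t ∈ Set.Ioo (0 : ℝ) T, ∀ x : H,
        (infConvSet B T m K lam ε β w t x).Nonempty ∧
        BddBelow (infConvSet B T m K lam ε β w t x)) ∧
    ConcaveOn ℝ (Set.Ioo (0 : ℝ) T ×ˢ (Set.univ : Set H))
      (fun p : ℝ × H =>
        infConv B T m K lam ε β w p.1 p.2 - ⟪B p.2, p.2⟫_ℝ / (2 * ε) - p.1 ^ 2 / (2 * β)) := by
  obtain ⟨M, hM0, hM⟩ := aux_rpow_bound C lam k m hC hlam hk hkm
  -- lower bound on all elements of the inf-convolution set
  have hbound : ∀ t : ℝ, ∀ x : H, ∀ c ∈ infConvSet B T m K lam ε β w t x, -C - M ≤ c := by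
    rintro t x c ⟨⟨s, y⟩, ⟨hs, -⟩, rfl⟩
    simp only
    have h1 : -C * (1 + ‖y‖ ^ k) ≤ w s y := hgrowth s hs y
    have h2 : 0 ≤ ⟪B (x - y), x - y⟫_ℝ / (2 * ε) := div_nonneg (hBpos _) (by positivity)
    have h3 : 0 ≤ (t - s) ^ 2 / (2 * β) := by positivity
    have hym : 0 ≤ ‖y‖ ^ m := Real.rpow_nonneg (norm_nonneg y) m
    have h4 : lam * ‖y‖ ^ m ≤ lam * Real.exp (2 * m * K * (T - s)) * ‖y‖ ^ m := by
      have he : (1 : ℝ) ≤ Real.exp (2 * m * K * (T - s)) := by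
        apply Real.one_le_exp
        have : 0 ≤ T - s := by linarith [hs.2]
        positivity
      nlinarith [mul_nonneg hlam.le hym]
    have h5 := hM ‖y‖ (norm_nonneg y)
    nlinarith
  have hne : ∀ t : ℝ, ∀ x : H, (infConvSet B T m K lam ε β w t x).Nonempty :=
    fun t x => ⟨_, ⟨(T / 2, 0), ⟨⟨by linarith, by linarith⟩, trivial⟩, rfl⟩⟩
  have hbdd : ∀ t : ℝ, ∀ x : H, BddBelow (infConvSet B T m K lam ε β w t x) :=
    fun t x => ⟨-C - M, fun c hc => hbound t x c hc⟩
  refine ⟨fun t _ x => ⟨hne t x, hbdd t x⟩, ?_⟩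
  refine ⟨(convex_Ioo 0 T).prod convex_univ, ?_⟩
  rintro ⟨t1, x1⟩ hp ⟨t2, x2⟩ hq a b ha hb hab
  simp only [Prod.smul_mk, Prod.mk_add_mk, smul_eq_mul, Set.mem_prod, Set.mem_Ioo] at hp hq ⊢
  set tr : ℝ := a * t1 + b * t2 with htr
  set xr : H := a • x1 + b • x2 with hxr
  -- it suffices to lower-bound every element of the set at the combined point
  have key : ∀ c ∈ infConvSet B T m K lam ε β w tr xr,
      a * (infConv B T m K lam ε β w t1 x1 - ⟪B x1, x1⟫_ℝ / (2 * ε) - t1 ^ 2 / (2 * β))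
        + b * (infConv B T m K lam ε β w t2 x2 - ⟪B x2, x2⟫_ℝ / (2 * ε) - t2 ^ 2 / (2 * β))
        + ⟪B xr, xr⟫_ℝ / (2 * ε) + tr ^ 2 / (2 * β) ≤ c := by
    rintro c ⟨⟨s, y⟩, ⟨hs, -⟩, rfl⟩
    simp only
    have hE1 : infConv B T m K lam ε β w t1 x1 ≤
        w s y + ⟪B (x1 - y), x1 - y⟫_ℝ / (2 * ε) + (t1 - s) ^ 2 / (2 * β)
          + lam * Real.exp (2 * m * K * (T - s)) * ‖y‖ ^ m :=
      csInf_le (hbdd t1 x1) ⟨(s, y), ⟨hs, trivial⟩, rfl⟩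
    have hE2 : infConv B T m K lam ε β w t2 x2 ≤
        w s y + ⟪B (x2 - y), x2 - y⟫_ℝ / (2 * ε) + (t2 - s) ^ 2 / (2 * β)
          + lam * Real.exp (2 * m * K * (T - s)) * ‖y‖ ^ m :=
      csInf_le (hbdd t2 x2) ⟨(s, y), ⟨hs, trivial⟩, rfl⟩
    -- inner product expansions
    have hsub : ∀ u : H, ⟪B (u - y), u - y⟫_ℝ
        = ⟪B u, u⟫_ℝ - ⟪B u, y⟫_ℝ - ⟪B y, u⟫_ℝ + ⟪B y, y⟫_ℝ := by
      intro u
      simp only [map_sub, inner_sub_left, inner_sub_right]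
      ring
    have hquad : ⟪B xr, xr⟫_ℝ
        = a * a * ⟪B x1, x1⟫_ℝ + a * b * ⟪B x1, x2⟫_ℝ
          + b * a * ⟪B x2, x1⟫_ℝ + b * b * ⟪B x2, x2⟫_ℝ := by
      simp only [hxr, map_add, map_smul, inner_add_left, inner_add_right,
        real_inner_smul_left, real_inner_smul_right]
      ring
    have hlin1 : ⟪B xr, y⟫_ℝ = a * ⟪B x1, y⟫_ℝ + b * ⟪B x2, y⟫_ℝ := by
      simp only [hxr, map_add, map_smul, inner_add_left, real_inner_smul_left]
    have hlin2 : ⟪B y, xr⟫_ℝ = a * ⟪B y, x1⟫_ℝ + b * ⟪B y, x2⟫_ℝ := by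
      simp only [hxr, inner_add_right, real_inner_smul_right]
    have hb' : b = 1 - a := by linarith
    subst hb'
    have ha2 : a * (w s y + ⟪B (x1 - y), x1 - y⟫_ℝ / (2 * ε) + (t1 - s) ^ 2 / (2 * β)
          + lam * Real.exp (2 * m * K * (T - s)) * ‖y‖ ^ m)
        ≥ a * infConv B T m K lam ε β w t1 x1 := mul_le_mul_of_nonneg_left hE1 ha
    have hb2 : (1 - a) * (w s y + ⟪B (x2 - y), x2 - y⟫_ℝ / (2 * ε) + (t2 - s) ^ 2 / (2 * β)
          + lam * Real.exp (2 * m * K * (T - s)) * ‖y‖ ^ m)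
        ≥ (1 - a) * infConv B T m K lam ε β w t2 x2 := mul_le_mul_of_nonneg_left hE2 hb
    -- the exact affine identity
    have hid : (tr - s) ^ 2 / (2 * β) - tr ^ 2 / (2 * β)
          = a * ((t1 - s) ^ 2 / (2 * β) - t1 ^ 2 / (2 * β))
            + (1 - a) * ((t2 - s) ^ 2 / (2 * β) - t2 ^ 2 / (2 * β)) := by
      rw [htr]
      field_simp
      try ring
    have hid2 : ⟪B (xr - y), xr - y⟫_ℝ - ⟪B xr, xr⟫_ℝ
          = a * (⟪B (x1 - y), x1 - y⟫_ℝ - ⟪B x1, x1⟫_ℝ)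
            + (1 - a) * (⟪B (x2 - y), x2 - y⟫_ℝ - ⟪B x2, x2⟫_ℝ) := by
      rw [hsub xr, hsub x1, hsub x2, hlin1, hlin2]
      ring
    have h2e : (0 : ℝ) < 2 * ε := by positivity
    have hdiv : (⟪B (xr - y), xr - y⟫_ℝ - ⟪B xr, xr⟫_ℝ) / (2 * ε)
          = a * ((⟪B (x1 - y), x1 - y⟫_ℝ - ⟪B x1, x1⟫_ℝ) / (2 * ε))
            + (1 - a) * ((⟪B (x2 - y), x2 - y⟫_ℝ - ⟪B x2, x2⟫_ℝ) / (2 * ε)) := by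
      rw [hid2]; field_simp; try ring
    have hdivsub : ∀ u v : ℝ, (u - v) / (2 * ε) = u / (2 * ε) - v / (2 * ε) :=
      fun u v => sub_div u v (2 * ε)
    rw [hdivsub, hdivsub, hdivsub] at hdiv
    linarith
  have hle := le_csInf (hne tr xr) key
  simp only [infConv] at hle ⊢
  linarith [hle]
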